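/- Let x_1,…,x_n be the bin counts of a multinomial sample of size N with probabilities p_1,…,p_n. Then E[Σ_{i=1}^{n−1}|x_{i+1}−x_i|] ≤ N·Σ_{i=1}^{n−1}|p_{i+1}−p_i| + 2√(n−1)·√N. -/

import Mathlib

open Finset

/-- Expectation of `f` of the bin counts of a multinomial sample of size `N`
with bin probabilities `p : Fin n → ℝ`. -/
noncomputable def multExp (n N : ℕ) (p : Fin n → ℝ) (f : (Fin n → ℕ) → ℝ) : ℝ :=
  ∑ x ∈ (Fintype.piFinset fun _ : Fin n => Finset.range (N + 1)).filter
      (fun x => ∑ i, x i = N),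
    (Nat.multinomial Finset.univ x : ℝ) * (∏ i, p i ^ x i) * f x

/-- Discrete total variation of a histogram with `n + 1` bins. -/
noncomputable def dtv (n : ℕ) (x : Fin (n + 1) → ℕ) : ℝ :=
  ∑ i : Fin n, |(x i.succ : ℝ) - (x i.castSucc : ℝ)|


section
variable {m N : ℕ} (p : Fin m → ℝ)

noncomputable def mw (x : Fin m → ℕ) : ℝ :=
  (Nat.multinomial Finset.univ x : ℝ) * ∏ i, p i ^ x i

lemma genfun (q : Fin m → ℝ) :
    ∑ x ∈ Finset.piAntidiag (univ : Finset (Fin m)) N, mw q x = (∑ i, q i) ^ N := by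
  rw [Finset.sum_pow_eq_sum_piAntidiag]
  rfl

lemma setEq :
    ((Fintype.piFinset fun _ : Fin m => Finset.range (N + 1)).filter
      (fun x => ∑ i, x i = N)) = Finset.piAntidiag (univ : Finset (Fin m)) N := by
  ext x
  simp only [Finset.mem_filter, Fintype.mem_piFinset, Finset.mem_range, Nat.lt_succ_iff,
    Finset.mem_piAntidiag]
  constructor
  · rintro ⟨-, h⟩; exact ⟨h, fun i _ => mem_univ i⟩
  · rintro ⟨h, -⟩
    exact ⟨fun i => h ▸ Finset.single_le_sum (fun j _ => Nat.zero_le _) (mem_univ i), h⟩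

end

-- helper pow lemmas
lemma pow_h1 (k : ℕ) (t : ℝ) : t * ((k : ℝ) * t ^ (k - 1)) = (k : ℝ) * t ^ k := by
  cases k with
  | zero => simp
  | succ k => push_cast; rw [pow_succ]; ring

lemma pow_h2 (k : ℕ) (t : ℝ) :
    t ^ 2 * ((k : ℝ) * (((k - 1 : ℕ) : ℝ) * t ^ (k - 2))) = (k : ℝ) * ((k - 1 : ℕ) : ℝ) * t ^ k := by
  match k with
  | 0 => simp
  | 1 => simp
  | (k + 2) =>
    have h1 : k + 2 - 1 = k + 1 := rfl
    have h2 : k + 2 - 2 = k := rfl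
    rw [h1, h2]
    push_cast
    ring

lemma cast_h (k : ℕ) : (k : ℝ) * ((k - 1 : ℕ) : ℝ) = (k : ℝ) ^ 2 - k := by
  cases k with
  | zero => simp
  | succ k => push_cast [Nat.add_sub_cancel]; ring

section
variable {m N : ℕ}

lemma momentsAux (p : Fin m → ℝ) (hsum : ∑ i, p i = 1) (j : Fin m) :
    (∑ x ∈ Finset.piAntidiag (univ : Finset (Fin m)) N,
        ((Nat.multinomial Finset.univ x : ℝ) * ∏ i, p i ^ x i) * x j = N * p j) ∧
    (∑ x ∈ Finset.piAntidiag (univ : Finset (Fin m)) N,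
        ((Nat.multinomial Finset.univ x : ℝ) * ∏ i, p i ^ x i) * ((x j : ℝ) * ((x j - 1 : ℕ) : ℝ))
      = (N : ℝ) * ((N - 1 : ℕ) : ℝ) * p j ^ 2) := by
  classical
  set S := Finset.piAntidiag (univ : Finset (Fin m)) N with hS
  set s' : ℝ := ∑ i ∈ univ.erase j, p i with hs'
  set c : (Fin m → ℕ) → ℝ :=
    fun x => (Nat.multinomial Finset.univ x : ℝ) * ∏ i ∈ univ.erase j, p i ^ x i with hc
  have hsp : s' + p j = 1 := by
    rw [hs', ← hsum, ← Finset.add_sum_erase _ _ (mem_univ j)]; ring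
  -- generating function identity
  have hG : (fun t : ℝ => ∑ x ∈ S, c x * t ^ x j) = fun t => (s' + t) ^ N := by
    funext t
    have := Finset.sum_pow_eq_sum_piAntidiag (univ : Finset (Fin m))
      (Function.update p j t) N
    rw [Finset.sum_update_of_mem (mem_univ j)] at this
    rw [Finset.sdiff_singleton_eq_erase] at this
    rw [show t + ∑ i ∈ univ.erase j, p i = s' + t by ring] at this
    rw [this]
    refine Finset.sum_congr rfl fun x _ => ?_
    rw [← Finset.mul_prod_erase univ (fun i => Function.update p j t i ^ x i) (mem_univ j),
      Function.update_self]
    have : ∏ i ∈ univ.erase j, Function.update p j t i ^ x i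
        = ∏ i ∈ univ.erase j, p i ^ x i := by
      refine Finset.prod_congr rfl fun i hi => ?_
      rw [Function.update_of_ne (Finset.ne_of_mem_erase hi)]
    rw [this]; ring
  -- first derivative
  have hD1 : ∀ t : ℝ, HasDerivAt (fun t : ℝ => ∑ x ∈ S, c x * t ^ x j)
      (∑ x ∈ S, c x * ((x j : ℝ) * t ^ (x j - 1))) t := by
    intro t
    exact HasDerivAt.fun_sum fun x _ => (hasDerivAt_pow (x j) t).const_mul (c x)
  have hD1' : ∀ t : ℝ, HasDerivAt (fun t : ℝ => (s' + t) ^ N)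
      ((N : ℝ) * (s' + t) ^ (N - 1)) t := by
    intro t
    have h := ((hasDerivAt_id t).const_add s').fun_pow N
    simpa using h
  have hM1 : ∀ t : ℝ, ∑ x ∈ S, c x * ((x j : ℝ) * t ^ (x j - 1))
      = (N : ℝ) * (s' + t) ^ (N - 1) := by
    intro t
    have h1 := hD1 t
    rw [hG] at h1
    exact h1.unique (hD1' t)
  -- second derivative
  have hD2 : ∀ t : ℝ, HasDerivAt (fun t : ℝ => ∑ x ∈ S, c x * ((x j : ℝ) * t ^ (x j - 1)))
      (∑ x ∈ S, c x * ((x j : ℝ) * (((x j - 1 : ℕ) : ℝ) * t ^ (x j - 2)))) t := by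
    intro t
    refine HasDerivAt.fun_sum fun x _ => ?_
    have h := ((hasDerivAt_pow (x j - 1) t).const_mul ((x j : ℝ))).const_mul (c x)
    have : x j - 1 - 1 = x j - 2 := by omega
    rw [this] at h
    exact h
  have hD2' : ∀ t : ℝ, HasDerivAt (fun t : ℝ => (N : ℝ) * (s' + t) ^ (N - 1))
      ((N : ℝ) * (((N - 1 : ℕ) : ℝ) * (s' + t) ^ (N - 2))) t := by
    intro t
    have h := (((hasDerivAt_id t).const_add s').pow (N - 1)).const_mul (N : ℝ)
    have h2 : N - 1 - 1 = N - 2 := by omega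
    rw [h2] at h
    simpa using h
  have hM2 : ∀ t : ℝ, ∑ x ∈ S, c x * ((x j : ℝ) * (((x j - 1 : ℕ) : ℝ) * t ^ (x j - 2)))
      = (N : ℝ) * (((N - 1 : ℕ) : ℝ) * (s' + t) ^ (N - 2)) := by
    intro t
    have h1 := hD2 t
    rw [funext hM1] at h1
    exact h1.unique (hD2' t)
  have prodsplit : ∀ x : Fin m → ℕ,
      (∏ i, p i ^ x i) = p j ^ x j * ∏ i ∈ univ.erase j, p i ^ x i :=
    fun x => (Finset.mul_prod_erase univ (fun i => p i ^ x i) (mem_univ j)).symm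
  constructor
  · have key := hM1 (p j)
    rw [hsp, one_pow, mul_one] at key
    calc ∑ x ∈ S, ((Nat.multinomial Finset.univ x : ℝ) * ∏ i, p i ^ x i) * x j
        = p j * ∑ x ∈ S, c x * ((x j : ℝ) * p j ^ (x j - 1)) := by
          rw [Finset.mul_sum]
          refine Finset.sum_congr rfl fun x _ => ?_
          rw [prodsplit x, hc]
          have h := pow_h1 (x j) (p j)
          linear_combination (-((Nat.multinomial Finset.univ x : ℝ) * ∏ i ∈ univ.erase j, p i ^ x i)) * h
      _ = N * p j := by rw [key]; ring
  · have key := hM2 (p j)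
    rw [hsp, one_pow, mul_one] at key
    calc ∑ x ∈ S, ((Nat.multinomial Finset.univ x : ℝ) * ∏ i, p i ^ x i)
          * ((x j : ℝ) * ((x j - 1 : ℕ) : ℝ))
        = p j ^ 2 * ∑ x ∈ S, c x * ((x j : ℝ) * (((x j - 1 : ℕ) : ℝ) * p j ^ (x j - 2))) := by
          rw [Finset.mul_sum]
          refine Finset.sum_congr rfl fun x _ => ?_
          rw [prodsplit x, hc]
          have h := pow_h2 (x j) (p j)
          linear_combination (-((Nat.multinomial Finset.univ x : ℝ) * ∏ i ∈ univ.erase j, p i ^ x i)) * h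
      _ = (N : ℝ) * ((N - 1 : ℕ) : ℝ) * p j ^ 2 := by rw [key]; ring

end

section
variable {m N : ℕ}

lemma w_nonneg (p : Fin m → ℝ) (hp : ∀ i, 0 ≤ p i) (x : Fin m → ℕ) :
    0 ≤ (Nat.multinomial Finset.univ x : ℝ) * ∏ i, p i ^ x i :=
  mul_nonneg (Nat.cast_nonneg _) (Finset.prod_nonneg fun i _ => pow_nonneg (hp i) _)

lemma norm1' (p : Fin m → ℝ) (hsum : ∑ i, p i = 1) :
    ∑ x ∈ Finset.piAntidiag (univ : Finset (Fin m)) N,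
      (Nat.multinomial Finset.univ x : ℝ) * ∏ i, p i ^ x i = 1 := by
  have h := Finset.sum_pow_eq_sum_piAntidiag (univ : Finset (Fin m)) p N
  rw [hsum, one_pow] at h
  rw [← h]

lemma Evar (p : Fin m → ℝ) (hsum : ∑ i, p i = 1) (j : Fin m) :
    ∑ x ∈ Finset.piAntidiag (univ : Finset (Fin m)) N,
      ((Nat.multinomial Finset.univ x : ℝ) * ∏ i, p i ^ x i) * ((x j : ℝ) - N * p j) ^ 2
      = N * p j - N * p j ^ 2 := by
  obtain ⟨hE1, hE2⟩ := momentsAux (N := N) p hsum j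
  set S := Finset.piAntidiag (univ : Finset (Fin m)) N with hS
  set w : (Fin m → ℕ) → ℝ :=
    fun x => (Nat.multinomial Finset.univ x : ℝ) * ∏ i, p i ^ x i with hw
  have expand : ∀ x : Fin m → ℕ, w x * ((x j : ℝ) - N * p j) ^ 2
      = w x * ((x j : ℝ) * ((x j - 1 : ℕ) : ℝ))
        + (1 - 2 * (N : ℝ) * p j) * (w x * x j) + ((N : ℝ) * p j) ^ 2 * w x := by
    intro x
    have h := cast_h (x j)
    linear_combination (-(w x)) * h
  calc ∑ x ∈ S, w x * ((x j : ℝ) - N * p j) ^ 2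
      = (∑ x ∈ S, w x * ((x j : ℝ) * ((x j - 1 : ℕ) : ℝ)))
        + (1 - 2 * (N : ℝ) * p j) * (∑ x ∈ S, w x * x j)
        + ((N : ℝ) * p j) ^ 2 * (∑ x ∈ S, w x) := by
        rw [Finset.mul_sum, Finset.mul_sum, ← Finset.sum_add_distrib, ← Finset.sum_add_distrib]
        exact Finset.sum_congr rfl fun x _ => expand x
    _ = N * p j - N * p j ^ 2 := by
        rw [hE1, hE2, norm1' p hsum]
        have h := cast_h N
        linear_combination (p j ^ 2) * h
end

section
variable {m N : ℕ}

lemma Eabs (p : Fin m → ℝ) (hp : ∀ i, 0 ≤ p i) (hsum : ∑ i, p i = 1) (j : Fin m) :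
    ∑ x ∈ Finset.piAntidiag (univ : Finset (Fin m)) N,
      ((Nat.multinomial Finset.univ x : ℝ) * ∏ i, p i ^ x i) * |(x j : ℝ) - N * p j|
      ≤ Real.sqrt N * Real.sqrt (p j) := by
  set S := Finset.piAntidiag (univ : Finset (Fin m)) N with hS
  set w : (Fin m → ℕ) → ℝ :=
    fun x => (Nat.multinomial Finset.univ x : ℝ) * ∏ i, p i ^ x i with hw
  have hwn : ∀ x, 0 ≤ w x := w_nonneg p hp
  set y : (Fin m → ℕ) → ℝ := fun x => (x j : ℝ) - N * p j with hy
  have step1 : ∀ x, w x * |y x| = Real.sqrt (w x) * Real.sqrt (w x * (y x) ^ 2) := by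
    intro x
    rw [← Real.sqrt_mul (hwn x)]
    have : w x * (w x * (y x) ^ 2) = (w x * |y x|) ^ 2 := by
      rw [mul_pow, sq_abs]; ring
    rw [this, Real.sqrt_sq (mul_nonneg (hwn x) (abs_nonneg _))]
  calc ∑ x ∈ S, w x * |y x| = ∑ x ∈ S, Real.sqrt (w x) * Real.sqrt (w x * (y x) ^ 2) :=
        Finset.sum_congr rfl fun x _ => step1 x
    _ ≤ Real.sqrt (∑ x ∈ S, w x) * Real.sqrt (∑ x ∈ S, w x * (y x) ^ 2) :=
        Real.sum_sqrt_mul_sqrt_le S hwn (fun x => mul_nonneg (hwn x) (sq_nonneg _))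
    _ ≤ Real.sqrt N * Real.sqrt (p j) := by
        rw [norm1' p hsum, Real.sqrt_one, one_mul]
        have hvar : ∑ x ∈ S, w x * (y x) ^ 2 = N * p j - N * p j ^ 2 := Evar p hsum j
        rw [hvar, ← Real.sqrt_mul (Nat.cast_nonneg N)]
        apply Real.sqrt_le_sqrt
        nlinarith [sq_nonneg (p j), Nat.cast_nonneg (α := ℝ) N]
end

lemma sum_comp_le {n : ℕ} (p : Fin (n + 1) → ℝ) (hp : ∀ i, 0 ≤ p i)
    (hsum : ∑ i, p i = 1) (e : Fin n → Fin (n + 1)) (he : Function.Injective e) :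
    ∑ i : Fin n, p (e i) ≤ 1 := by
  have h : ∑ j ∈ univ.image e, p j = ∑ i : Fin n, p (e i) :=
    Finset.sum_image (fun x _ y _ hxy => he hxy)
  rw [← h, ← hsum]
  exact Finset.sum_le_sum_of_subset_of_nonneg (Finset.subset_univ _) fun j _ _ => hp j

lemma cs_tail {n : ℕ} (p : Fin (n + 1) → ℝ) (hp : ∀ i, 0 ≤ p i) (hsum : ∑ i, p i = 1) :
    ∑ i : Fin n, (Real.sqrt (p i.succ) + Real.sqrt (p i.castSucc)) ≤ 2 * Real.sqrt n := by
  set T := ∑ i : Fin n, (Real.sqrt (p i.succ) + Real.sqrt (p i.castSucc)) with hT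
  have hT0 : 0 ≤ T :=
    Finset.sum_nonneg fun i _ => add_nonneg (Real.sqrt_nonneg _) (Real.sqrt_nonneg _)
  have hT2 : T ^ 2 ≤ 4 * n := by
    have h1 : T ^ 2 ≤ (n : ℝ) *
        ∑ i : Fin n, (Real.sqrt (p i.succ) + Real.sqrt (p i.castSucc)) ^ 2 := by
      have := sq_sum_le_card_mul_sum_sq (s := (univ : Finset (Fin n)))
        (f := fun i => Real.sqrt (p i.succ) + Real.sqrt (p i.castSucc))
      simpa using this
    have h2 : ∑ i : Fin n, (Real.sqrt (p i.succ) + Real.sqrt (p i.castSucc)) ^ 2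
        ≤ ∑ i : Fin n, 2 * (p i.succ + p i.castSucc) := by
      refine Finset.sum_le_sum fun i _ => ?_
      have ha : Real.sqrt (p i.succ) ^ 2 = p i.succ := Real.sq_sqrt (hp _)
      have hb : Real.sqrt (p i.castSucc) ^ 2 = p i.castSucc := Real.sq_sqrt (hp _)
      nlinarith [sq_nonneg (Real.sqrt (p i.succ) - Real.sqrt (p i.castSucc))]
    have h3 : ∑ i : Fin n, 2 * (p i.succ + p i.castSucc) ≤ 4 := by
      rw [← Finset.mul_sum, Finset.sum_add_distrib]
      have hs := sum_comp_le p hp hsum Fin.succ (Fin.succ_injective n)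
      have hc := sum_comp_le p hp hsum Fin.castSucc (Fin.castSucc_injective n)
      linarith
    calc T ^ 2 ≤ (n : ℝ) * ∑ i : Fin n, (Real.sqrt (p i.succ) + Real.sqrt (p i.castSucc)) ^ 2 := h1
      _ ≤ (n : ℝ) * 4 := by
          refine mul_le_mul_of_nonneg_left ?_ (Nat.cast_nonneg n)
          exact h2.trans h3
      _ = 4 * n := by ring
  calc T = Real.sqrt (T ^ 2) := (Real.sqrt_sq hT0).symm
    _ ≤ Real.sqrt (4 * n) := Real.sqrt_le_sqrt hT2
    _ = 2 * Real.sqrt n := by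
        rw [Real.sqrt_mul (by norm_num : (0:ℝ) ≤ 4),
          show (4 : ℝ) = 2 ^ 2 by norm_num, Real.sqrt_sq (by norm_num : (0:ℝ) ≤ 2)]


theorem multinomial_dtv_upper_bound (n N : ℕ) (p : Fin (n + 1) → ℝ)
    (hp : ∀ i, 0 ≤ p i) (hsum : ∑ i, p i = 1) :
    multExp (n + 1) N p (dtv n) ≤
      (N : ℝ) * (∑ i : Fin n, |p i.succ - p i.castSucc|) +
        2 * Real.sqrt (n : ℝ) * Real.sqrt (N : ℝ) := by
  classical
  set S := Finset.piAntidiag (univ : Finset (Fin (n + 1))) N with hSdef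
  set w : (Fin (n + 1) → ℕ) → ℝ :=
    fun x => (Nat.multinomial Finset.univ x : ℝ) * ∏ i, p i ^ x i with hw
  have hwn : ∀ x, 0 ≤ w x := w_nonneg p hp
  have hnorm : ∑ x ∈ S, w x = 1 := norm1' p hsum
  have step0 : multExp (n + 1) N p (dtv n)
      = ∑ i : Fin n, ∑ x ∈ S, w x * |(x i.succ : ℝ) - (x i.castSucc : ℝ)| := by
    rw [multExp, setEq]
    simp only [dtv, Finset.mul_sum]
    exact Finset.sum_comm
  rw [step0]
  have per_i : ∀ i : Fin n, ∑ x ∈ S, w x * |(x i.succ : ℝ) - (x i.castSucc : ℝ)|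
      ≤ (N : ℝ) * |p i.succ - p i.castSucc|
        + (Real.sqrt N * Real.sqrt (p i.succ) + Real.sqrt N * Real.sqrt (p i.castSucc)) := by
    intro i
    have tri : ∀ x : Fin (n + 1) → ℕ,
        |(x i.succ : ℝ) - (x i.castSucc : ℝ)|
        ≤ |(N : ℝ) * p i.succ - (N : ℝ) * p i.castSucc|
          + (|(x i.succ : ℝ) - N * p i.succ| + |(x i.castSucc : ℝ) - N * p i.castSucc|) := by
      intro x
      have h1 : (x i.succ : ℝ) - (x i.castSucc : ℝ)
          = ((N : ℝ) * p i.succ - (N : ℝ) * p i.castSucc)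
            + (((x i.succ : ℝ) - N * p i.succ) + -((x i.castSucc : ℝ) - N * p i.castSucc)) := by
        ring
      rw [h1]
      refine (abs_add_le _ _).trans ?_
      have h2 := abs_add_le ((x i.succ : ℝ) - N * p i.succ)
        (-((x i.castSucc : ℝ) - N * p i.castSucc))
      rw [abs_neg] at h2
      linarith
    calc ∑ x ∈ S, w x * |(x i.succ : ℝ) - (x i.castSucc : ℝ)|
        ≤ ∑ x ∈ S, w x * (|(N : ℝ) * p i.succ - (N : ℝ) * p i.castSucc|
            + (|(x i.succ : ℝ) - N * p i.succ| + |(x i.castSucc : ℝ) - N * p i.castSucc|)) :=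
          Finset.sum_le_sum fun x _ => mul_le_mul_of_nonneg_left (tri x) (hwn x)
      _ = |(N : ℝ) * p i.succ - (N : ℝ) * p i.castSucc| * (∑ x ∈ S, w x)
            + ((∑ x ∈ S, w x * |(x i.succ : ℝ) - N * p i.succ|)
              + (∑ x ∈ S, w x * |(x i.castSucc : ℝ) - N * p i.castSucc|)) := by
          rw [Finset.mul_sum, ← Finset.sum_add_distrib, ← Finset.sum_add_distrib]
          exact Finset.sum_congr rfl fun x _ => by ring
      _ ≤ (N : ℝ) * |p i.succ - p i.castSucc|
            + (Real.sqrt N * Real.sqrt (p i.succ) + Real.sqrt N * Real.sqrt (p i.castSucc)) := by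
          rw [hnorm, mul_one]
          have habs : |(N : ℝ) * p i.succ - (N : ℝ) * p i.castSucc|
              = (N : ℝ) * |p i.succ - p i.castSucc| := by
            rw [← mul_sub, abs_mul, abs_of_nonneg (Nat.cast_nonneg N)]
          rw [habs]
          have e1 := Eabs (N := N) p hp hsum i.succ
          have e2 := Eabs (N := N) p hp hsum i.castSucc
          have := add_le_add e1 e2
          linarith
  calc ∑ i : Fin n, ∑ x ∈ S, w x * |(x i.succ : ℝ) - (x i.castSucc : ℝ)|
      ≤ ∑ i : Fin n, ((N : ℝ) * |p i.succ - p i.castSucc|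
          + (Real.sqrt N * Real.sqrt (p i.succ) + Real.sqrt N * Real.sqrt (p i.castSucc))) :=
        Finset.sum_le_sum fun i _ => per_i i
    _ = (N : ℝ) * (∑ i : Fin n, |p i.succ - p i.castSucc|)
          + Real.sqrt N * ∑ i : Fin n, (Real.sqrt (p i.succ) + Real.sqrt (p i.castSucc)) := by
        rw [Finset.sum_add_distrib, Finset.mul_sum, Finset.mul_sum]
        congr 1
        exact Finset.sum_congr rfl fun i _ => by ring
    _ ≤ (N : ℝ) * (∑ i : Fin n, |p i.succ - p i.castSucc|)
          + 2 * Real.sqrt (n : ℝ) * Real.sqrt (N : ℝ) := by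
        have hcs := cs_tail p hp hsum
        have h := mul_le_mul_of_nonneg_left hcs (Real.sqrt_nonneg (N : ℝ))
        linarith
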